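/- arXiv:1501.07483 — 2 statements merged into one kernel-verified Lean document; each statement's English description precedes it below -/
import Mathlib

section
/- For all x > 1, the function f(x) = ((3/4)·x·√(x²−1) − (3/4)·arcosh(x))^(2/3) / (x² − 1) is strictly monotonically decreasing on (1, ∞). -/
noncomputable def arcosh (x : ℝ) : ℝ := Real.log (x + Real.sqrt (x ^ 2 - 1))

open Real hiding arcosh continuousOn_arcosh hasDerivAt_arcosh
open Set

lemma one_lt_sq' {x : ℝ} (hx : 1 < x) : 0 < x ^ 2 - 1 := by nlinarith

lemma sqrtpos' {x : ℝ} (hx : 1 < x) : 0 < Real.sqrt (x ^ 2 - 1) :=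
  Real.sqrt_pos.mpr (one_lt_sq' hx)

lemma sqsqrt' {x : ℝ} (hx : 1 < x) : Real.sqrt (x ^ 2 - 1) ^ 2 = x ^ 2 - 1 :=
  Real.sq_sqrt (one_lt_sq' hx).le

lemma hasDerivAt_sqrt' {x : ℝ} (hx : 1 < x) :
    HasDerivAt (fun y : ℝ => Real.sqrt (y ^ 2 - 1)) (x / Real.sqrt (x ^ 2 - 1)) x := by
  have h1 : HasDerivAt (fun y : ℝ => y ^ 2 - 1) (2 * x) x := by
    simpa using ((hasDerivAt_pow 2 x).sub_const 1)
  have h := h1.sqrt (ne_of_gt (one_lt_sq' hx))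
  convert h using 1
  have hs := sqrtpos' hx
  field_simp

lemma hasDerivAt_arcosh {x : ℝ} (hx : 1 < x) :
    HasDerivAt arcosh (1 / Real.sqrt (x ^ 2 - 1)) x := by
  have hs : 0 < Real.sqrt (x ^ 2 - 1) := sqrtpos' hx
  have hxs : 0 < x + Real.sqrt (x ^ 2 - 1) := by linarith
  have h1 : HasDerivAt (fun y : ℝ => y + Real.sqrt (y ^ 2 - 1))
      (1 + x / Real.sqrt (x ^ 2 - 1)) x :=
    (hasDerivAt_id x).add (hasDerivAt_sqrt' hx)
  have h2 := h1.log (ne_of_gt hxs)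
  convert h2 using 1
  · rfl
  field_simp
  ring

lemma continuousOn_arcosh : ContinuousOn arcosh (Ici (1 : ℝ)) := by
  apply ContinuousOn.log
  · exact continuousOn_id.add (((continuous_pow 2).sub continuous_const).continuousOn.sqrt)
  · intro x hx
    have h1 : (1 : ℝ) ≤ x := hx
    have h2 : (0 : ℝ) ≤ Real.sqrt (x ^ 2 - 1) := Real.sqrt_nonneg _
    intro h; linarith

lemma continuousOn_G : ContinuousOn (fun y : ℝ => y * Real.sqrt (y ^ 2 - 1) - arcosh y) (Ici 1) :=
  (continuousOn_id.mul (((continuous_pow 2).sub continuous_const).continuousOn.sqrt)).sub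
    continuousOn_arcosh

lemma G_deriv {x : ℝ} (hx : 1 < x) :
    HasDerivAt (fun y : ℝ => y * Real.sqrt (y ^ 2 - 1) - arcosh y)
      (2 * Real.sqrt (x ^ 2 - 1)) x := by
  have h := ((hasDerivAt_id x).mul (hasDerivAt_sqrt' hx)).sub (hasDerivAt_arcosh hx)
  convert h using 1
  · rfl
  · rfl
  · rfl
  have hs := sqrtpos' hx
  have hq := sqsqrt' hx
  field_simp
  simp only [id_eq]
  nlinarith [hq]

lemma G_pos {x : ℝ} (hx : 1 < x) :
    0 < x * Real.sqrt (x ^ 2 - 1) - arcosh x := by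
  have hmono : StrictMonoOn (fun y : ℝ => y * Real.sqrt (y ^ 2 - 1) - arcosh y) (Ici 1) := by
    apply strictMonoOn_of_deriv_pos (convex_Ici 1) continuousOn_G
    intro y hy
    rw [interior_Ici] at hy
    rw [(G_deriv hy).deriv]
    exact mul_pos two_pos (sqrtpos' hy)
  have h := hmono self_mem_Ici (le_of_lt hx) hx
  have h1 : arcosh 1 = 0 := by norm_num [arcosh]
  simpa [h1] using h

lemma key {x : ℝ} (hx : 1 < x) :
    3 * x * arcosh x < Real.sqrt (x ^ 2 - 1) * (x ^ 2 + 2) := by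
  have hmono : StrictMonoOn
      (fun y : ℝ => Real.sqrt (y ^ 2 - 1) * (y ^ 2 + 2) - 3 * y * arcosh y) (Ici 1) := by
    apply strictMonoOn_of_deriv_pos (convex_Ici 1)
    · exact ((((continuous_pow 2).sub continuous_const).continuousOn.sqrt).mul
        ((continuous_pow 2).add continuous_const).continuousOn).sub
        ((continuous_const.mul continuous_id).continuousOn.mul continuousOn_arcosh)
    · intro y hy
      rw [interior_Ici] at hy
      have hd : HasDerivAt (fun z : ℝ => Real.sqrt (z ^ 2 - 1) * (z ^ 2 + 2) - 3 * z * arcosh z)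
          (3 * (y * Real.sqrt (y ^ 2 - 1) - arcosh y)) y := by
        have h1 : HasDerivAt (fun z : ℝ => Real.sqrt (z ^ 2 - 1) * (z ^ 2 + 2))
            ((y / Real.sqrt (y ^ 2 - 1)) * (y ^ 2 + 2) + Real.sqrt (y ^ 2 - 1) * (2 * y)) y :=
          (hasDerivAt_sqrt' hy).mul (by simpa using ((hasDerivAt_pow 2 y).add_const 2))
        have h2 : HasDerivAt (fun z : ℝ => 3 * z * arcosh z)
            (3 * arcosh y + 3 * y * (1 / Real.sqrt (y ^ 2 - 1))) y := by
          have h3 : HasDerivAt (fun z : ℝ => 3 * z) 3 y := by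
            simpa using (hasDerivAt_id y).const_mul (3 : ℝ)
          exact h3.mul (hasDerivAt_arcosh hy)
        have h4 := h1.sub h2
        convert h4 using 1
        · rfl
        · rfl
        · rfl
        have hs := sqrtpos' hy
        have hq := sqsqrt' hy
        field_simp
        linear_combination y * hq
      rw [hd.deriv]
      have := G_pos hy
      linarith
  have h := hmono self_mem_Ici (le_of_lt hx) hx
  have h1 : arcosh 1 = 0 := by norm_num [arcosh]
  simp only [h1] at h
  norm_num at h
  linarith

lemma g_pos {x : ℝ} (hx : 1 < x) :
    0 < (3 / 4 : ℝ) * x * Real.sqrt (x ^ 2 - 1) - 3 / 4 * arcosh x := by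
  have := G_pos hx
  nlinarith

noncomputable def hfun (x : ℝ) : ℝ :=
  ((3 / 4 : ℝ) * x * Real.sqrt (x ^ 2 - 1) - 3 / 4 * arcosh x) / (x ^ 2 - 1) ^ ((3 : ℝ) / 2)

lemma rpow32 {x : ℝ} (hx : 1 < x) :
    (x ^ 2 - 1) ^ ((3 : ℝ) / 2) = (x ^ 2 - 1) * Real.sqrt (x ^ 2 - 1) := by
  have h0 := one_lt_sq' hx
  rw [show (3 : ℝ) / 2 = 1 + 1 / 2 by norm_num, Real.rpow_add h0, Real.rpow_one,
    ← Real.sqrt_eq_rpow]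

lemma hfun_hasDeriv {x : ℝ} (hx : 1 < x) :
    HasDerivAt hfun
      (((3 / 2 * Real.sqrt (x ^ 2 - 1)) * (x ^ 2 - 1) ^ ((3 : ℝ) / 2) -
          ((3 / 4 : ℝ) * x * Real.sqrt (x ^ 2 - 1) - 3 / 4 * arcosh x) *
            (2 * x * (3 / 2) * (x ^ 2 - 1) ^ ((3 : ℝ) / 2 - 1))) /
        ((x ^ 2 - 1) ^ ((3 : ℝ) / 2)) ^ 2) x := by
  have h0 := one_lt_sq' hx
  have hs := sqrtpos' hx
  have hnum : HasDerivAt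
      (fun y : ℝ => (3 / 4 : ℝ) * y * Real.sqrt (y ^ 2 - 1) - 3 / 4 * arcosh y)
      (3 / 2 * Real.sqrt (x ^ 2 - 1)) x := by
    have h := (G_deriv hx).const_mul (3 / 4 : ℝ)
    have heq : (fun y : ℝ => (3 / 4 : ℝ) * (y * Real.sqrt (y ^ 2 - 1) - arcosh y)) =
        fun y : ℝ => (3 / 4 : ℝ) * y * Real.sqrt (y ^ 2 - 1) - 3 / 4 * arcosh y := by
      funext y; ring
    rw [heq] at h
    convert h using 1
    · rfl
    · rfl
    ring
  have hinner : HasDerivAt (fun y : ℝ => y ^ 2 - 1) (2 * x) x := by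
    simpa using ((hasDerivAt_pow 2 x).sub_const 1)
  have hden : HasDerivAt (fun y : ℝ => (y ^ 2 - 1) ^ ((3 : ℝ) / 2))
      (2 * x * (3 / 2) * (x ^ 2 - 1) ^ ((3 : ℝ) / 2 - 1)) x :=
    hinner.rpow_const (Or.inl (ne_of_gt h0))
  exact hnum.div hden (by positivity)

lemma hfun_deriv_neg {x : ℝ} (hx : 1 < x) : deriv hfun x < 0 := by
  rw [(hfun_hasDeriv hx).deriv]
  have h0 := one_lt_sq' hx
  have hs := sqrtpos' hx
  have hq := sqsqrt' hx
  have hk := key hx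
  have h32 := rpow32 hx
  have h12 : (x ^ 2 - 1) ^ ((3 : ℝ) / 2 - 1) = Real.sqrt (x ^ 2 - 1) := by
    rw [show (3 : ℝ) / 2 - 1 = 1 / 2 by norm_num, ← Real.sqrt_eq_rpow]
  rw [h32, h12]
  apply div_neg_of_neg_of_pos
  · nlinarith [hq, mul_pos (mul_pos hs hs) hs, sqrtpos' hx]
  · positivity

lemma hfun_anti : StrictAntiOn hfun (Set.Ioi 1) := by
  apply strictAntiOn_of_deriv_neg (convex_Ioi 1)
  · intro x hx
    exact ((hfun_hasDeriv hx).differentiableAt.continuousAt).continuousWithinAt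
  · intro x hx
    rw [interior_Ioi] at hx
    exact hfun_deriv_neg hx

theorem stmt_0 :
    StrictAntiOn
      (fun x : ℝ =>
        ((3 / 4) * x * Real.sqrt (x ^ 2 - 1) - (3 / 4) * arcosh x) ^ ((2 : ℝ) / 3) /
          (x ^ 2 - 1))
      (Set.Ioi 1) := by
  intro a ha b hb hab
  have ha1 : (1 : ℝ) < a := ha
  have hb1 : (1 : ℝ) < b := hb
  have heq : ∀ x : ℝ, 1 < x →
      ((3 / 4) * x * Real.sqrt (x ^ 2 - 1) - (3 / 4) * arcosh x) ^ ((2 : ℝ) / 3) /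
          (x ^ 2 - 1) = hfun x ^ ((2 : ℝ) / 3) := by
    intro x hx
    have h0 := one_lt_sq' hx
    have hg := g_pos hx
    rw [hfun, Real.div_rpow hg.le (by positivity), ← Real.rpow_mul h0.le]
    norm_num
  simp only [heq a ha1, heq b hb1]
  have hlt : hfun b < hfun a := hfun_anti ha hb hab
  have hbpos : 0 < hfun b := by
    have := g_pos hb1
    have h0 := one_lt_sq' hb1
    rw [hfun]
    positivity
  exact Real.rpow_lt_rpow hbpos.le hlt (by norm_num)
end

section
/- For 0 < s < π/2, the function z(s) = (sec s · tan s − log(sec s + tan s)) / tan³ s satisfies z'(s) < 0, i.e. z is strictly decreasing on (0, π/2). -/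
open Real Set

noncomputable def z (s : ℝ) : ℝ :=
  ((1 / Real.cos s) * Real.tan s - Real.log (1 / Real.cos s + Real.tan s)) / (Real.tan s) ^ 3

noncomputable def hh (s : ℝ) : ℝ :=
  1 / Real.cos s * Real.tan s - Real.log (1 / Real.cos s + Real.tan s)

noncomputable def gg (s : ℝ) : ℝ := 3 * (1 / Real.cos s) * hh s - 2 * Real.tan s ^ 3

lemma hh_deriv {s : ℝ} (hc : 0 < Real.cos s) (ht : 0 ≤ Real.tan s) :
    HasDerivAt hh (2 * (1 / Real.cos s) * Real.tan s ^ 2) s := by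
  have hcne : Real.cos s ≠ 0 := ne_of_gt hc
  have hsec : HasDerivAt (fun x => 1 / Real.cos x) (Real.sin s / Real.cos s ^ 2) s := by
    have := (Real.hasDerivAt_cos s).inv hcne
    simpa [one_div, neg_neg, neg_div, Pi.inv_def] using this
  have htan : HasDerivAt Real.tan (1 / Real.cos s ^ 2) s := Real.hasDerivAt_tan hcne
  have hne : 1 / Real.cos s + Real.tan s ≠ 0 := by positivity
  have hlog : HasDerivAt (fun x => Real.log (1 / Real.cos x + Real.tan x))
      ((Real.sin s / Real.cos s ^ 2 + 1 / Real.cos s ^ 2) / (1 / Real.cos s + Real.tan s)) s :=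
    (hsec.add htan).log hne
  have hmain := (hsec.mul htan).sub hlog
  convert hmain using 1
  iterate 3 rfl
  have hs2 : Real.sin s ^ 2 = 1 - Real.cos s ^ 2 := by nlinarith [Real.sin_sq_add_cos_sq s]
  have hne2 : 1 + Real.sin s ≠ 0 := by nlinarith [Real.neg_one_le_sin s, Real.sin_le_one s]
  rw [Real.tan_eq_sin_div_cos]
  field_simp
  linear_combination (1 + Real.sin s) * hs2

lemma cos_pos_of_mem {s : ℝ} (hs : s ∈ Set.Ico (0:ℝ) (Real.pi/2)) : 0 < Real.cos s :=
  Real.cos_pos_of_mem_Ioo ⟨by linarith [hs.1, Real.pi_pos], hs.2⟩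

lemma tan_nonneg_of_mem {s : ℝ} (hs : s ∈ Set.Ico (0:ℝ) (Real.pi/2)) : 0 ≤ Real.tan s := by
  have hc := cos_pos_of_mem hs
  have hsin : 0 ≤ Real.sin s := Real.sin_nonneg_of_nonneg_of_le_pi hs.1
    (by linarith [hs.2, Real.pi_pos])
  rw [Real.tan_eq_sin_div_cos]; positivity

lemma tan_pos_of_mem {s : ℝ} (hs : s ∈ Set.Ioo (0:ℝ) (Real.pi/2)) : 0 < Real.tan s :=
  Real.tan_pos_of_pos_of_lt_pi_div_two hs.1 hs.2

lemma hh_pos {s : ℝ} (hs : s ∈ Set.Ioo (0:ℝ) (Real.pi/2)) : 0 < hh s := by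
  have hmono : StrictMonoOn hh (Set.Ico (0:ℝ) (Real.pi/2)) := by
    apply strictMonoOn_of_deriv_pos (convex_Ico _ _)
    · intro x hx
      exact (hh_deriv (cos_pos_of_mem hx) (tan_nonneg_of_mem hx)).continuousAt.continuousWithinAt
    · intro x hx
      rw [interior_Ico] at hx
      have hx' : x ∈ Set.Ico (0:ℝ) (Real.pi/2) := ⟨le_of_lt hx.1, hx.2⟩
      rw [(hh_deriv (cos_pos_of_mem hx') (tan_nonneg_of_mem hx')).deriv]
      have := cos_pos_of_mem hx'
      have := tan_pos_of_mem hx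
      positivity
  have h0 : hh 0 = 0 := by simp [hh]
  have := hmono (Set.mem_Ico.2 ⟨le_refl 0, by linarith [Real.pi_pos]⟩)
    (Set.mem_Ico.2 ⟨le_of_lt hs.1, hs.2⟩) hs.1
  linarith [h0 ▸ this]

lemma gg_deriv {s : ℝ} (hc : 0 < Real.cos s) (ht : 0 ≤ Real.tan s) :
    HasDerivAt gg (3 * (1 / Real.cos s) * Real.tan s * hh s) s := by
  have hcne : Real.cos s ≠ 0 := ne_of_gt hc
  have hsec : HasDerivAt (fun x => 1 / Real.cos x) (Real.sin s / Real.cos s ^ 2) s := by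
    have := (Real.hasDerivAt_cos s).inv hcne
    simpa [one_div, neg_neg, neg_div, Pi.inv_def] using this
  have htan : HasDerivAt Real.tan (1 / Real.cos s ^ 2) s := Real.hasDerivAt_tan hcne
  have h1 : HasDerivAt (fun x => 3 * (1 / Real.cos x) * hh x)
      (3 * (Real.sin s / Real.cos s ^ 2) * hh s
        + 3 * (1 / Real.cos s) * (2 * (1 / Real.cos s) * Real.tan s ^ 2)) s := by
    have := ((hsec.const_mul 3).mul (hh_deriv hc ht))
    exact this.congr_deriv (by ring)
  have h2 : HasDerivAt (fun x => 2 * Real.tan x ^ 3)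
      (2 * (3 * Real.tan s ^ 2 * (1 / Real.cos s ^ 2))) s := by
    have := ((htan.pow 3).const_mul 2)
    exact this.congr_deriv (by ring)
  have hmain := h1.sub h2
  convert hmain using 1
  iterate 3 rfl
  rw [Real.tan_eq_sin_div_cos]
  field_simp
  ring

lemma gg_pos {s : ℝ} (hs : s ∈ Set.Ioo (0:ℝ) (Real.pi/2)) : 0 < gg s := by
  have hmono : StrictMonoOn gg (Set.Ico (0:ℝ) (Real.pi/2)) := by
    apply strictMonoOn_of_deriv_pos (convex_Ico _ _)
    · intro x hx
      exact (gg_deriv (cos_pos_of_mem hx) (tan_nonneg_of_mem hx)).continuousAt.continuousWithinAt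
    · intro x hx
      rw [interior_Ico] at hx
      have hx' : x ∈ Set.Ico (0:ℝ) (Real.pi/2) := ⟨le_of_lt hx.1, hx.2⟩
      rw [(gg_deriv (cos_pos_of_mem hx') (tan_nonneg_of_mem hx')).deriv]
      have := cos_pos_of_mem hx'
      have := tan_pos_of_mem hx
      have := hh_pos hx
      positivity
  have h0 : gg 0 = 0 := by simp [gg, hh]
  have := hmono (Set.mem_Ico.2 ⟨le_refl 0, by linarith [Real.pi_pos]⟩)
    (Set.mem_Ico.2 ⟨le_of_lt hs.1, hs.2⟩) hs.1
  linarith [h0 ▸ this]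

lemma z_deriv {s : ℝ} (hs : s ∈ Set.Ioo (0:ℝ) (Real.pi/2)) :
    HasDerivAt z ((2 * (1 / Real.cos s) * Real.tan s ^ 2 * Real.tan s ^ 3
      - hh s * (3 * Real.tan s ^ 2 * (1 / Real.cos s ^ 2))) / (Real.tan s ^ 3) ^ 2) s := by
  have hs' : s ∈ Set.Ico (0:ℝ) (Real.pi/2) := ⟨le_of_lt hs.1, hs.2⟩
  have hc := cos_pos_of_mem hs'
  have ht := tan_pos_of_mem hs
  have hcne : Real.cos s ≠ 0 := ne_of_gt hc
  have htan : HasDerivAt Real.tan (1 / Real.cos s ^ 2) s := Real.hasDerivAt_tan hcne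
  have hden : HasDerivAt (fun x => Real.tan x ^ 3) (3 * Real.tan s ^ 2 * (1 / Real.cos s ^ 2)) s := by
    simpa [Pi.pow_def] using htan.pow 3
  have hdne : Real.tan s ^ 3 ≠ 0 := by positivity
  exact (hh_deriv hc (le_of_lt ht)).div hden hdne

lemma z_deriv_neg {s : ℝ} (hs : s ∈ Set.Ioo (0:ℝ) (Real.pi/2)) : deriv z s < 0 := by
  have hs' : s ∈ Set.Ico (0:ℝ) (Real.pi/2) := ⟨le_of_lt hs.1, hs.2⟩
  have hc := cos_pos_of_mem hs'
  have ht := tan_pos_of_mem hs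
  have hg := gg_pos hs
  rw [(z_deriv hs).deriv]
  have hnum : 2 * (1 / Real.cos s) * Real.tan s ^ 2 * Real.tan s ^ 3
      - hh s * (3 * Real.tan s ^ 2 * (1 / Real.cos s ^ 2))
      = -(1 / Real.cos s) * Real.tan s ^ 2 * gg s := by
    unfold gg
    field_simp
    ring
  rw [hnum]
  have hsec : 0 < 1 / Real.cos s := by positivity
  have : 0 < (1 / Real.cos s) * Real.tan s ^ 2 * gg s := by positivity
  have hden : 0 < (Real.tan s ^ 3) ^ 2 := by positivity
  exact div_neg_of_neg_of_pos (by nlinarith) hden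

theorem stmt_4 :
    (∀ s ∈ Set.Ioo (0 : ℝ) (Real.pi / 2), deriv z s < 0) ∧
      StrictAntiOn z (Set.Ioo (0 : ℝ) (Real.pi / 2)) := by
  refine ⟨fun s hs => z_deriv_neg hs, ?_⟩
  apply strictAntiOn_of_deriv_neg (convex_Ioo _ _)
  · intro x hx
    exact (z_deriv hx).continuousAt.continuousWithinAt
  · intro x hx
    rw [interior_Ioo] at hx
    exact z_deriv_neg hx
end
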